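/- (Case of general position: first frame expansion, relations I₂ = 1/3 and I₁ = −4·I₆ of (3.10)) Under the stated assumptions, the covariant derivative of X along X satisfies ∇_X X = −4·I₆·X + (1/3)·Y on U, where I₆ = (A_{0.1} − B_{1.0})/(3·F²) − (A·F_{0.1} − B·F_{1.0})/(3·F³). -/

import Mathlib

noncomputable section

open Real

/-- Partial derivative in the first argument (`f_{1.0}`). -/
def pdx (f : ℝ → ℝ → ℝ) : ℝ → ℝ → ℝ := fun x y => deriv (fun t => f t y) x

/-- Partial derivative in the second argument (`f_{0.1}`). -/
def pdy (f : ℝ → ℝ → ℝ) : ℝ → ℝ → ℝ := fun x y => deriv (fun t => f x t) y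

/-- Indexed partial derivative: `0 ↦ ∂/∂x`, `1 ↦ ∂/∂y`. -/
def pd (i : Fin 2) (f : ℝ → ℝ → ℝ) : ℝ → ℝ → ℝ := if i = 0 then pdx f else pdy f

/-- Smoothness of a two-variable real function on a set `U ⊆ ℝ²`. -/
def Smooth2 (U : Set (ℝ × ℝ)) (f : ℝ → ℝ → ℝ) : Prop :=
  ContDiffOn ℝ (⊤ : ℕ∞) (Function.uncurry f) U

/-- The quantity `A` of formula (1.6). -/
def coefA (P Q R S : ℝ → ℝ → ℝ) : ℝ → ℝ → ℝ := fun x y =>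
  pdy (pdy P) x y - 2 * pdx (pdy Q) x y + pdx (pdx R) x y
    + 2 * P x y * pdx S x y + S x y * pdx P x y
    - 3 * P x y * pdy R x y - 3 * R x y * pdy P x y
    - 3 * Q x y * pdx R x y + 6 * Q x y * pdy Q x y

/-- The quantity `B` of formula (1.6). -/
def coefB (P Q R S : ℝ → ℝ → ℝ) : ℝ → ℝ → ℝ := fun x y =>
  pdx (pdx S) x y - 2 * pdx (pdy R) x y + pdy (pdy Q) x y
    - 2 * S x y * pdy P x y - P x y * pdy S x y
    + 3 * S x y * pdx Q x y + 3 * Q x y * pdx S x y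
    + 3 * R x y * pdy Q x y - 6 * R x y * pdx R x y

/-- The quantity `G` of formula (2.4). -/
def coefG (P Q R S : ℝ → ℝ → ℝ) : ℝ → ℝ → ℝ := fun x y =>
  -(coefB P Q R S x y) * pdx (coefB P Q R S) x y
    - 3 * coefA P Q R S x y * pdy (coefB P Q R S) x y
    + 4 * coefB P Q R S x y * pdy (coefA P Q R S) x y
    + 3 * S x y * (coefA P Q R S x y)^2
    - 6 * R x y * coefA P Q R S x y * coefB P Q R S x y
    + 3 * Q x y * (coefB P Q R S x y)^2

/-- The quantity `H` of formula (2.4). -/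
def coefH (P Q R S : ℝ → ℝ → ℝ) : ℝ → ℝ → ℝ := fun x y =>
  -(coefA P Q R S x y) * pdy (coefA P Q R S) x y
    - 3 * coefB P Q R S x y * pdx (coefA P Q R S) x y
    + 4 * coefA P Q R S x y * pdx (coefB P Q R S) x y
    - 3 * P x y * (coefB P Q R S x y)^2
    + 6 * Q x y * coefA P Q R S x y * coefB P Q R S x y
    - 3 * R x y * (coefA P Q R S x y)^2

/-- The quantity `F⁵` of formula (2.2). -/
def coefF5 (P Q R S : ℝ → ℝ → ℝ) : ℝ → ℝ → ℝ := fun x y =>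
  coefA P Q R S x y * coefB P Q R S x y * pdy (coefA P Q R S) x y
    + coefA P Q R S x y * coefB P Q R S x y * pdx (coefB P Q R S) x y
    - (coefA P Q R S x y)^2 * pdy (coefB P Q R S) x y
    - (coefB P Q R S x y)^2 * pdx (coefA P Q R S) x y
    - P x y * (coefB P Q R S x y)^3
    + 3 * Q x y * coefA P Q R S x y * (coefB P Q R S x y)^2
    - 3 * R x y * (coefA P Q R S x y)^2 * coefB P Q R S x y
    + S x y * (coefA P Q R S x y)^3

/-- The fully covariant symbol `θ_{ijk}` of (2.7) built from the ODE coefficients. -/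
def thetaLow (P Q R S : ℝ → ℝ → ℝ) (i j k : Fin 2) : ℝ → ℝ → ℝ :=
  match i.1 + j.1 + k.1 with
  | 0 => P
  | 1 => Q
  | 2 => R
  | _ => S

/-- The symbol `θ^k_{ij}` of (2.8), obtained by raising the first index with `d^{kr}`. -/
def thetaUp (P Q R S : ℝ → ℝ → ℝ) (k i j : Fin 2) : ℝ → ℝ → ℝ :=
  if k = 0 then thetaLow P Q R S 1 i j
  else fun x y => -(thetaLow P Q R S 0 i j x y)

/-- The affine connection `Γ^k_{ij} = θ^k_{ij} − (φ_i δ^k_j + φ_j δ^k_i)/3` of (3.3)/(4.22). -/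
def gamConn (P Q R S phi1 phi2 : ℝ → ℝ → ℝ) (k i j : Fin 2) : ℝ → ℝ → ℝ := fun x y =>
  thetaUp P Q R S k i j x y -
    ((if i = 0 then phi1 x y else phi2 x y) * (if k = j then (1:ℝ) else 0)
      + (if j = 0 then phi1 x y else phi2 x y) * (if k = i then (1:ℝ) else 0)) / 3

/-- Covariant derivative `(∇_V W)^k = Σ_i V^i (∂W^k/∂x^i + Σ_s Γ^k_{is} W^s)`. -/
def covD (Gam : Fin 2 → Fin 2 → Fin 2 → ℝ → ℝ → ℝ) (V W : Fin 2 → ℝ → ℝ → ℝ)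
    (k : Fin 2) : ℝ → ℝ → ℝ := fun x y =>
  ∑ i : Fin 2, V i x y * (pd i (W k) x y + ∑ s : Fin 2, Gam k i s x y * W s x y)

/-- The fifth root `F = (F⁵)^{1/5}` (real power), for the case of general position `F⁵ > 0`. -/
def frF (P Q R S : ℝ → ℝ → ℝ) : ℝ → ℝ → ℝ := fun x y =>
  (coefF5 P Q R S x y) ^ ((1:ℝ)/5)

/-- `φ₁ = −F_{1.0}/F`. -/
def phiGP1 (P Q R S : ℝ → ℝ → ℝ) : ℝ → ℝ → ℝ := fun x y =>
  -(pdx (frF P Q R S) x y / frF P Q R S x y)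

/-- `φ₂ = −F_{0.1}/F`. -/
def phiGP2 (P Q R S : ℝ → ℝ → ℝ) : ℝ → ℝ → ℝ := fun x y =>
  -(pdy (frF P Q R S) x y / frF P Q R S x y)

/-- The vector field `X = F⁻²·(B, −A)` of (3.4). -/
def frameX (P Q R S : ℝ → ℝ → ℝ) (k : Fin 2) : ℝ → ℝ → ℝ := fun x y =>
  (if k = 0 then coefB P Q R S x y else -(coefA P Q R S x y)) / (frF P Q R S x y)^2

/-- The vector field `Y = F⁻⁴·(G, H)` of (3.4). -/
def frameY (P Q R S : ℝ → ℝ → ℝ) (k : Fin 2) : ℝ → ℝ → ℝ := fun x y =>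
  (if k = 0 then coefG P Q R S x y else coefH P Q R S x y) / (frF P Q R S x y)^4

/-- The invariant `I₆` in the simplified form (3.11). -/
def inv6 (P Q R S : ℝ → ℝ → ℝ) : ℝ → ℝ → ℝ := fun x y =>
  (pdy (coefA P Q R S) x y - pdx (coefB P Q R S) x y) / (3 * (frF P Q R S x y)^2)
    - (coefA P Q R S x y * pdy (frF P Q R S) x y
        - coefB P Q R S x y * pdx (frF P Q R S) x y) / (3 * (frF P Q R S x y)^3)

open Function

lemma hasDerivAt_pdx {U : Set (ℝ×ℝ)} (hU : IsOpen U) {f : ℝ → ℝ → ℝ} (hf : Smooth2 U f)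
    {x y : ℝ} (h : (x,y) ∈ U) : HasDerivAt (fun t => f t y) (pdx f x y) x := by
  have hdiff : DifferentiableAt ℝ (uncurry f) (x,y) :=
    (hf.differentiableOn (by simp)).differentiableAt (hU.mem_nhds h)
  have h1 : HasDerivAt (fun t:ℝ => (t,y)) ((1:ℝ),(0:ℝ)) x :=
    (hasDerivAt_id x).prodMk (hasDerivAt_const x y)
  have h2 : HasDerivAt (fun t => f t y) _ x := hdiff.hasFDerivAt.comp_hasDerivAt (l := uncurry f) x h1
  exact h2.differentiableAt.hasDerivAt

lemma hasDerivAt_pdy {U : Set (ℝ×ℝ)} (hU : IsOpen U) {f : ℝ → ℝ → ℝ} (hf : Smooth2 U f)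
    {x y : ℝ} (h : (x,y) ∈ U) : HasDerivAt (fun t => f x t) (pdy f x y) y := by
  have hdiff : DifferentiableAt ℝ (uncurry f) (x,y) :=
    (hf.differentiableOn (by simp)).differentiableAt (hU.mem_nhds h)
  have h1 : HasDerivAt (fun t:ℝ => (x,t)) ((0:ℝ),(1:ℝ)) y :=
    (hasDerivAt_const y x).prodMk (hasDerivAt_id y)
  have h2 : HasDerivAt (fun t => f x t) _ y := hdiff.hasFDerivAt.comp_hasDerivAt (l := uncurry f) y h1
  exact h2.differentiableAt.hasDerivAt

lemma smooth2_pdx {U : Set (ℝ × ℝ)} (hU : IsOpen U) {f : ℝ → ℝ → ℝ}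
    (hf : Smooth2 U f) : Smooth2 U (pdx f) := by
  have hfd : ContDiffOn ℝ (⊤:ℕ∞) (fun p => fderiv ℝ (uncurry f) p) U :=
    hf.fderiv_of_isOpen hU (mod_cast le_top)
  have h2 : ContDiffOn ℝ (⊤:ℕ∞) (fun p => fderiv ℝ (uncurry f) p ((1:ℝ),(0:ℝ))) U :=
    hfd.clm_apply contDiffOn_const
  refine h2.congr ?_
  rintro ⟨x,y⟩ hp
  have hdiff : DifferentiableAt ℝ (uncurry f) (x,y) :=
    (hf.differentiableOn (by simp)).differentiableAt (hU.mem_nhds hp)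
  have h1 : HasDerivAt (fun t:ℝ => (t,y)) ((1:ℝ),(0:ℝ)) x :=
    (hasDerivAt_id x).prodMk (hasDerivAt_const x y)
  have h3 : HasDerivAt (fun t => f t y) (fderiv ℝ (uncurry f) (x,y) (1,0)) x :=
    hdiff.hasFDerivAt.comp_hasDerivAt (l := uncurry f) x h1
  simpa [uncurry, pdx] using h3.deriv

lemma smooth2_pdy {U : Set (ℝ × ℝ)} (hU : IsOpen U) {f : ℝ → ℝ → ℝ}
    (hf : Smooth2 U f) : Smooth2 U (pdy f) := by
  have hfd : ContDiffOn ℝ (⊤:ℕ∞) (fun p => fderiv ℝ (uncurry f) p) U :=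
    hf.fderiv_of_isOpen hU (mod_cast le_top)
  have h2 : ContDiffOn ℝ (⊤:ℕ∞) (fun p => fderiv ℝ (uncurry f) p ((0:ℝ),(1:ℝ))) U :=
    hfd.clm_apply contDiffOn_const
  refine h2.congr ?_
  rintro ⟨x,y⟩ hp
  have hdiff : DifferentiableAt ℝ (uncurry f) (x,y) :=
    (hf.differentiableOn (by simp)).differentiableAt (hU.mem_nhds hp)
  have h1 : HasDerivAt (fun t:ℝ => (x,t)) ((0:ℝ),(1:ℝ)) y :=
    (hasDerivAt_const y x).prodMk (hasDerivAt_id y)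
  have h3 : HasDerivAt (fun t => f x t) (fderiv ℝ (uncurry f) (x,y) (0,1)) y :=
    hdiff.hasFDerivAt.comp_hasDerivAt (l := uncurry f) y h1
  simpa [uncurry, pdy] using h3.deriv

variable {U : Set (ℝ × ℝ)} {P Q R S : ℝ → ℝ → ℝ}

lemma smoothA (hU : IsOpen U) (hP : Smooth2 U P) (hQ : Smooth2 U Q)
    (hR : Smooth2 U R) (hS : Smooth2 U S) : Smooth2 U (coefA P Q R S) := by
  have h1 := smooth2_pdy hU (smooth2_pdy hU hP)
  have h2 := smooth2_pdx hU (smooth2_pdy hU hQ)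
  have h3 := smooth2_pdx hU (smooth2_pdx hU hR)
  have h4 := smooth2_pdx hU hS
  have h5 := smooth2_pdx hU hP
  have h6 := smooth2_pdy hU hR
  have h7 := smooth2_pdy hU hP
  have h8 := smooth2_pdx hU hR
  have h9 := smooth2_pdy hU hQ
  unfold Smooth2 at *
  unfold coefA
  unfold Function.uncurry at *
  fun_prop

lemma smoothB (hU : IsOpen U) (hP : Smooth2 U P) (hQ : Smooth2 U Q)
    (hR : Smooth2 U R) (hS : Smooth2 U S) : Smooth2 U (coefB P Q R S) := by
  have h1 := smooth2_pdx hU (smooth2_pdx hU hS)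
  have h2 := smooth2_pdx hU (smooth2_pdy hU hR)
  have h3 := smooth2_pdy hU (smooth2_pdy hU hQ)
  have h4 := smooth2_pdy hU hP
  have h5 := smooth2_pdy hU hS
  have h6 := smooth2_pdx hU hQ
  have h7 := smooth2_pdx hU hS
  have h8 := smooth2_pdy hU hQ
  have h9 := smooth2_pdx hU hR
  unfold Smooth2 at *
  unfold coefB
  unfold Function.uncurry at *
  fun_prop

lemma smoothF5 (hU : IsOpen U) (hP : Smooth2 U P) (hQ : Smooth2 U Q)
    (hR : Smooth2 U R) (hS : Smooth2 U S) : Smooth2 U (coefF5 P Q R S) := by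
  have hA := smoothA hU hP hQ hR hS
  have hB := smoothB hU hP hQ hR hS
  have h1 := smooth2_pdy hU hA
  have h2 := smooth2_pdx hU hB
  have h3 := smooth2_pdy hU hB
  have h4 := smooth2_pdx hU hA
  unfold Smooth2 at *
  unfold coefF5
  unfold Function.uncurry at *
  fun_prop

/-- First frame expansion of (3.5): `∇_X X = −4·I₆·X + (1/3)·Y` (relations
`I₁ = −4·I₆` and `I₂ = 1/3` of (3.10)). -/
theorem frame_expansion_XX
    (U : Set (ℝ × ℝ)) (hU : IsOpen U) (hUconn : IsConnected U)
    (P Q R S : ℝ → ℝ → ℝ)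
    (hP : Smooth2 U P) (hQ : Smooth2 U Q) (hR : Smooth2 U R) (hS : Smooth2 U S)
    (hpos : ∀ x y : ℝ, (x, y) ∈ U → 0 < coefF5 P Q R S x y) :
    ∀ k : Fin 2, ∀ x y : ℝ, (x, y) ∈ U →
      covD (gamConn P Q R S (phiGP1 P Q R S) (phiGP2 P Q R S))
          (frameX P Q R S) (frameX P Q R S) k x y
        = -4 * inv6 P Q R S x y * frameX P Q R S k x y
          + (1/3) * frameY P Q R S k x y := by
  intro k x y hxy
  have hA := smoothA hU hP hQ hR hS
  have hB := smoothB hU hP hQ hR hS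
  have hF5 := smoothF5 hU hP hQ hR hS
  have hf5pos := hpos x y hxy
  have hfpos : 0 < frF P Q R S x y := Real.rpow_pos_of_pos hf5pos _
  have hfne : frF P Q R S x y ≠ 0 := ne_of_gt hfpos
  have hne2 : frF P Q R S x y ^ 2 ≠ 0 := pow_ne_zero 2 hfne
  have hBx := hasDerivAt_pdx hU hB hxy
  have hBy := hasDerivAt_pdy hU hB hxy
  have hAx := hasDerivAt_pdx hU hA hxy
  have hAy := hasDerivAt_pdy hU hA hxy
  have hFx : HasDerivAt (fun t => frF P Q R S t y) (pdx (frF P Q R S) x y) x := by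
    have h1 := (hasDerivAt_pdx hU hF5 hxy).rpow_const (p := 1/5) (Or.inl (ne_of_gt hf5pos))
    exact h1.differentiableAt.hasDerivAt
  have hFy : HasDerivAt (fun t => frF P Q R S x t) (pdy (frF P Q R S) x y) y := by
    have h1 := (hasDerivAt_pdy hU hF5 hxy).rpow_const (p := 1/5) (Or.inl (ne_of_gt hf5pos))
    exact h1.differentiableAt.hasDerivAt
  have e1 : pdx (frameX P Q R S 0) x y
      = deriv (fun t => coefB P Q R S t y / frF P Q R S t y ^ 2) x := rfl
  have e2 : pdy (frameX P Q R S 0) x y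
      = deriv (fun t => coefB P Q R S x t / frF P Q R S x t ^ 2) y := rfl
  have e3 : pdx (frameX P Q R S 1) x y
      = deriv (fun t => -coefA P Q R S t y / frF P Q R S t y ^ 2) x := rfl
  have e4 : pdy (frameX P Q R S 1) x y
      = deriv (fun t => -coefA P Q R S x t / frF P Q R S x t ^ 2) y := rfl
  have d1 : deriv (fun t => coefB P Q R S t y / frF P Q R S t y ^ 2) x = _ := (hBx.div (hFx.pow 2) hne2).deriv
  have d2 : deriv (fun t => coefB P Q R S x t / frF P Q R S x t ^ 2) y = _ := (hBy.div (hFy.pow 2) hne2).deriv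
  have d3 : deriv (fun t => -coefA P Q R S t y / frF P Q R S t y ^ 2) x = _ := ((hAx.neg).div (hFx.pow 2) hne2).deriv
  have d4 : deriv (fun t => -coefA P Q R S x t / frF P Q R S x t ^ 2) y = _ := ((hAy.neg).div (hFy.pow 2) hne2).deriv
  have pd0 : ∀ f : ℝ → ℝ → ℝ, pd 0 f = pdx f := fun _ => rfl
  have pd1 : ∀ f : ℝ → ℝ → ℝ, pd 1 f = pdy f := fun _ => rfl
  fin_cases k <;> simp only [Fin.zero_eta, Fin.mk_one, Fin.isValue]
  · simp only [covD, Fin.sum_univ_two, pd0, pd1, e1, e2, d1, d2,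
      gamConn, thetaUp, thetaLow, frameX, frameY, inv6, phiGP1, phiGP2,
      coefG, coefH]
    norm_num
    field_simp
    ring
  · simp only [covD, Fin.sum_univ_two, pd0, pd1, e3, e4, d3, d4,
      gamConn, thetaUp, thetaLow, frameX, frameY, inv6, phiGP1, phiGP2,
      coefG, coefH]
    norm_num
    field_simp
    ring
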